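/- For 0 < p ≤ 1, the function N : ℝ × ℝ → [0,1] defined by N(x,t) = exp(−|x|^p/t) for t > 0 and N(x,t) = 0 for t ≤ 0, together with φ(c) = |c|^p, K = 2^p, and the product t-norm a*b = ab, is a fuzzy strong φ-b-norm on ℝ; in particular N(x+y, 2^p·s + t) ≥ N(x,s)·N(y,t) for all x,y ∈ ℝ and s,t > 0. -/
import Mathlib


open Filter Topology

/-- A fuzzy strong φ-b-norm on a real linear space `X`. -/
structure FuzzyStrongPhiBNorm (X : Type*) [AddCommGroup X] [Module ℝ X] where
  N : X → ℝ → ℝ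
  phi : ℝ → ℝ
  K : ℝ
  op : ℝ → ℝ → ℝ
  K_ge_one : 1 ≤ K
  N_nonneg : ∀ x t, 0 ≤ N x t
  N_le_one : ∀ x t, N x t ≤ 1
  phi_even : ∀ t, phi (-t) = phi t
  phi_one : phi 1 = 1
  phi_strictMono : StrictMonoOn phi (Set.Ioi (0:ℝ))
  phi_cont : ContinuousOn phi (Set.Ioi (0:ℝ))
  phi_lim_zero : Tendsto phi (nhdsWithin 0 (Set.Ioi 0)) (nhds 0)
  phi_lim_top : Tendsto phi atTop atTop
  bN1 : ∀ x t, t ≤ 0 → N x t = 0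
  bN2 : ∀ x, (∀ t > 0, N x t = 1) ↔ x = 0
  bN3 : ∀ (c : ℝ) (x : X) (t : ℝ), 0 < t → phi c ≠ 0 → N (c • x) t = N x (t / phi c)
  bN4 : ∀ (x y : X) (s t : ℝ), op (N x s) (N y t) ≤ N (x + y) (s + K * t)
  bN5_mono : ∀ x : X, Monotone (N x)
  bN5_lim : ∀ x : X, Tendsto (N x) atTop (nhds 1)

/-- The t-norm is continuous at (1,1): sequences tending to 1 combine to 1. -/
def ContAtOneOne (op : ℝ → ℝ → ℝ) : Prop :=
  ∀ a b : ℕ → ℝ, Tendsto a atTop (nhds 1) → Tendsto b atTop (nhds 1) →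
    Tendsto (fun n => op (a n) (b n)) atTop (nhds 1)

noncomputable def N4 (p : ℝ) (x t : ℝ) : ℝ := if 0 < t then Real.exp (-(|x| ^ p) / t) else 0

lemma rpow_subadd {p : ℝ} (hp : 0 < p) (hp1 : p ≤ 1) {a b : ℝ} (ha : 0 ≤ a) (hb : 0 ≤ b) :
    (a + b) ^ p ≤ a ^ p + b ^ p := by
  lift a to NNReal using ha
  lift b to NNReal using hb
  have := NNReal.rpow_add_le_add_rpow a b hp.le hp1
  exact_mod_cast this

lemma N4_key {p : ℝ} (hp : 0 < p) (hp1 : p ≤ 1) (x y s t u : ℝ) (hs : 0 < s) (ht : 0 < t)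
    (hsu : s ≤ u) (htu : t ≤ u) :
    N4 p x s * N4 p y t ≤ N4 p (x + y) u := by
  have hu : 0 < u := lt_of_lt_of_le hs hsu
  simp only [N4, if_pos hs, if_pos ht, if_pos hu, ← Real.exp_add]
  apply Real.exp_le_exp.2
  have h1 : |x + y| ^ p ≤ |x| ^ p + |y| ^ p := by
    calc |x + y| ^ p ≤ (|x| + |y|) ^ p :=
          Real.rpow_le_rpow (abs_nonneg _) (abs_add_le x y) hp.le
      _ ≤ |x| ^ p + |y| ^ p := rpow_subadd hp hp1 (abs_nonneg _) (abs_nonneg _)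
  have hxp : (0:ℝ) ≤ |x| ^ p := Real.rpow_nonneg (abs_nonneg _) _
  have hyp : (0:ℝ) ≤ |y| ^ p := Real.rpow_nonneg (abs_nonneg _) _
  have h2 : |x + y| ^ p / u ≤ |x| ^ p / s + |y| ^ p / t := by
    calc |x + y| ^ p / u ≤ (|x| ^ p + |y| ^ p) / u := by gcongr
      _ = |x| ^ p / u + |y| ^ p / u := add_div _ _ _
      _ ≤ |x| ^ p / s + |y| ^ p / t := by gcongr
  rw [neg_div, neg_div, neg_div]
  linarith

theorem stmt4 (p : ℝ) (hp : 0 < p) (hp1 : p ≤ 1) :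
    (∃ F : FuzzyStrongPhiBNorm ℝ,
      F.N = N4 p ∧ F.phi = (fun c : ℝ => |c| ^ p) ∧ F.K = 2 ^ p ∧
        F.op = (fun a b : ℝ => a * b)) ∧
    (∀ x y s t : ℝ, 0 < s → 0 < t →
      N4 p x s * N4 p y t ≤ N4 p (x + y) (2 ^ p * s + t)) := by
  have hK : (1:ℝ) ≤ 2 ^ p := Real.one_le_rpow (by norm_num) hp.le
  have hnn : ∀ x t : ℝ, 0 ≤ N4 p x t := by
    intro x t
    unfold N4; split
    · exact (Real.exp_pos _).le
    · rfl
  have hle1 : ∀ x t : ℝ, N4 p x t ≤ 1 := by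
    intro x t
    unfold N4; split
    · rename_i h
      rw [← Real.exp_zero]
      apply Real.exp_le_exp.2
      apply div_nonpos_of_nonpos_of_nonneg
      · simp [Real.rpow_nonneg (abs_nonneg x) p]
      · exact le_of_lt h
    · norm_num
  refine ⟨⟨{
    N := N4 p
    phi := fun c => |c| ^ p
    K := 2 ^ p
    op := fun a b => a * b
    K_ge_one := hK
    N_nonneg := hnn
    N_le_one := hle1
    phi_even := fun t => by simp [abs_neg]
    phi_one := by norm_num
    phi_strictMono := by
      intro a ha b hb hab
      have ha' : 0 < a := ha
      show |a| ^ p < |b| ^ p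
      rw [abs_of_pos ha', abs_of_pos (hb : (0:ℝ) < b)]
      exact Real.rpow_lt_rpow ha'.le hab hp
    phi_cont := by
      intro x hx
      have hx' : (0:ℝ) < x := hx
      exact ((Real.continuousAt_rpow_const _ p (Or.inl (by positivity))).comp
        (continuous_abs.continuousAt)).continuousWithinAt
    phi_lim_zero := by
      have : ContinuousAt (fun c : ℝ => |c| ^ p) 0 := by
        apply (Real.continuousAt_rpow_const _ p (Or.inr hp.le)).comp continuous_abs.continuousAt
      have h := this.continuousWithinAt (s := Set.Ioi 0)
      simpa [ContinuousWithinAt, abs_zero, Real.zero_rpow hp.ne'] using h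
    phi_lim_top := by
      apply (tendsto_rpow_atTop hp).comp
      exact tendsto_abs_atTop_atTop
    bN1 := by
      intro x t ht
      simp [N4, not_lt.2 ht]
    bN2 := by
      intro x
      constructor
      · intro h
        have h1 := h 1 one_pos
        simp only [N4, if_pos one_pos, div_one] at h1
        rw [show (1:ℝ) = Real.exp 0 by simp, Real.exp_eq_exp] at h1
        have hx : |x| ^ p = 0 := by linarith
        have := (Real.rpow_eq_zero (abs_nonneg x) hp.ne').mp hx
        exact abs_eq_zero.mp this
      · intro h t ht
        subst h
        simp [N4, if_pos ht, Real.zero_rpow hp.ne']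
    bN3 := by
      intro c x t ht hc
      have hc' : |c| ^ p ≠ 0 := hc
      have hcpos : (0:ℝ) < |c| ^ p := lt_of_le_of_ne (Real.rpow_nonneg (abs_nonneg c) p) (Ne.symm hc')
      have ht' : 0 < t / |c| ^ p := div_pos ht hcpos
      simp only [N4, if_pos ht, if_pos ht', smul_eq_mul]
      have he : -(|c * x| ^ p) / t = -(|x| ^ p) / (t / |c| ^ p) := by
        rw [abs_mul, Real.mul_rpow (abs_nonneg c) (abs_nonneg x), div_div_eq_mul_div]
        ring
      rw [he]
    bN4 := by
      intro x y s t
      show N4 p x s * N4 p y t ≤ N4 p (x + y) (s + 2 ^ p * t)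
      by_cases hs : 0 < s
      · by_cases ht : 0 < t
        · apply N4_key hp hp1 x y s t _ hs ht
          · nlinarith
          · nlinarith
        · have : N4 p y t = 0 := by simp [N4, ht]
          rw [this, mul_zero]
          exact hnn _ _
      · have : N4 p x s = 0 := by simp [N4, hs]
        rw [this, zero_mul]
        exact hnn _ _
    bN5_mono := by
      intro x a b hab
      unfold N4
      split
      · rename_i ha
        rw [if_pos (lt_of_lt_of_le ha hab)]
        have hc : (0:ℝ) ≤ |x| ^ p := Real.rpow_nonneg (abs_nonneg _) _
        apply Real.exp_le_exp.2
        rw [neg_div, neg_div, neg_le_neg_iff]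
        gcongr
      · rename_i ha
        split
        · exact (Real.exp_pos _).le
        · exact le_refl _
    bN5_lim := by
      intro x
      have h1 : Tendsto (fun t : ℝ => Real.exp (-(|x| ^ p) / t)) atTop (nhds 1) := by
        rw [show (1:ℝ) = Real.exp 0 by simp]
        apply Real.continuous_exp.continuousAt.tendsto.comp
        simpa using (tendsto_const_nhds (x := -(|x| ^ p))).div_atTop tendsto_id
      apply h1.congr'
      filter_upwards [eventually_gt_atTop 0] with t ht
      simp [N4, if_pos ht]
  }, rfl, rfl, rfl, rfl⟩, ?_⟩
  intro x y s t hs ht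
  apply N4_key hp hp1 x y s t _ hs ht
  · nlinarith
  · nlinarith
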